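/- Let θ be a real number with 0 < θ ≤ π/2, and let k = ⌊π/(4θ)⌋. Then sin²((2k+1)·θ) ≥ cos²(θ). In particular, with θ = arcsin(1/√N) for N ≥ 2, one gets sin²((2k+1)·θ) ≥ 1 − 1/N. -/
import Mathlib


open Real

lemma grover_main (θ : ℝ) (hθ : 0 < θ) (hθ' : θ ≤ π / 2) :
    (Real.sin ((2 * (⌊π / (4 * θ)⌋₊ : ℝ) + 1) * θ)) ^ 2 ≥ (Real.cos θ) ^ 2 := by
  set k : ℕ := ⌊π / (4 * θ)⌋₊ with hk
  have h4θ : 0 < 4 * θ := by linarith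
  have hπ : 0 < π := Real.pi_pos
  have hle : (k : ℝ) ≤ π / (4 * θ) := Nat.floor_le (by positivity)
  have hlt : π / (4 * θ) < (k : ℝ) + 1 := Nat.lt_floor_add_one _
  have hxub : (2 * (k : ℝ) + 1) * θ - π / 2 ≤ θ := by
    have h2 : 2 * (π / (4 * θ)) * θ = π / 2 := by field_simp; ring
    nlinarith
  have hxlb : -θ ≤ (2 * (k : ℝ) + 1) * θ - π / 2 := by
    have h2 : 2 * (π / (4 * θ)) * θ = π / 2 := by field_simp; ring
    nlinarith
  have habs : |(2 * (k : ℝ) + 1) * θ - π / 2| ≤ θ := abs_le.mpr ⟨hxlb, hxub⟩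
  have hcosθ : 0 ≤ Real.cos θ := Real.cos_nonneg_of_mem_Icc ⟨by linarith, hθ'⟩
  have hcos : Real.cos θ ≤ Real.cos ((2 * (k : ℝ) + 1) * θ - π / 2) := by
    calc Real.cos θ ≤ Real.cos |(2 * (k : ℝ) + 1) * θ - π / 2| :=
          Real.cos_le_cos_of_nonneg_of_le_pi (abs_nonneg _) (by linarith) habs
      _ = Real.cos ((2 * (k : ℝ) + 1) * θ - π / 2) := Real.cos_abs _
  have hsin : Real.sin ((2 * (k : ℝ) + 1) * θ)
      = Real.cos ((2 * (k : ℝ) + 1) * θ - π / 2) := by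
    rw [← Real.sin_add_pi_div_two]
    congr 1
    ring
  rw [hsin]
  exact pow_le_pow_left₀ hcosθ hcos 2

/-- For `0 < θ ≤ π/2` and `k = ⌊π/(4θ)⌋`, one has `sin²((2k+1)θ) ≥ cos²θ`.
In particular, with `θ = arcsin(1/√N)` for `N ≥ 2`,
`sin²((2k+1)θ) ≥ 1 − 1/N`. -/
theorem grover_iteration_count_bound (θ : ℝ) (hθ : 0 < θ) (hθ' : θ ≤ π / 2) :
    (Real.sin ((2 * (⌊π / (4 * θ)⌋₊ : ℝ) + 1) * θ)) ^ 2 ≥ (Real.cos θ) ^ 2 ∧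
    ∀ N : ℕ, 2 ≤ N →
      (Real.sin ((2 * (⌊π / (4 * Real.arcsin (1 / Real.sqrt N))⌋₊ : ℝ) + 1) *
          Real.arcsin (1 / Real.sqrt N))) ^ 2 ≥ 1 - 1 / N := by
  refine ⟨grover_main θ hθ hθ', fun N hN => ?_⟩
  have hN1 : (1 : ℝ) ≤ (N : ℝ) := by exact_mod_cast Nat.one_le_of_lt hN
  have hsqrt : 1 ≤ Real.sqrt N := by
    rw [show (1:ℝ) = Real.sqrt 1 by simp]
    exact Real.sqrt_le_sqrt hN1
  have hy0 : 0 < 1 / Real.sqrt (N : ℝ) := by positivity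
  have hy1 : 1 / Real.sqrt (N : ℝ) ≤ 1 := by
    rw [div_le_one (by linarith)]; exact hsqrt
  have hθ0 : 0 < Real.arcsin (1 / Real.sqrt N) := Real.arcsin_pos.mpr hy0
  have hθ2 : Real.arcsin (1 / Real.sqrt N) ≤ π / 2 := Real.arcsin_le_pi_div_two _
  have key := grover_main _ hθ0 hθ2
  have hcos2 : (Real.cos (Real.arcsin (1 / Real.sqrt N))) ^ 2 = 1 - 1 / N := by
    rw [Real.cos_arcsin, Real.sq_sqrt (by nlinarith [sq_nonneg (1 / Real.sqrt (N:ℝ))] : (0:ℝ) ≤ 1 - (1 / Real.sqrt N) ^ 2)]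
    congr 1
    rw [div_pow, one_pow, Real.sq_sqrt (by positivity : (0:ℝ) ≤ (N:ℝ))]
  rw [hcos2] at key
  exact key
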